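/- arXiv:0801.2097 — 9 statements merged into one kernel-verified Lean document; each statement's English description precedes it below -/
import Mathlib

section
/- There exists a strictly increasing sequence of natural numbers e_0 < e_1 < e_2 < ⋯ such that W_{e_n} = {e_{n+1}} for every n. -/
/-- The e-th partial computable function in a standard numbering. -/
def phi (e : ℕ) : ℕ →. ℕ :=
  Nat.Partrec.Code.eval (Denumerable.ofNat Nat.Partrec.Code e)

/-- W e is the domain of the e-th partial computable function. -/
def W (e : ℕ) : Set ℕ := (phi e).Dom

open Nat.Partrec Nat.Partrec.Code

lemma encode_const_lt (n : ℕ) :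
    Encodable.encode (Code.const n) < Encodable.encode (Code.const (n + 1)) := by
  exact (encode_lt_comp Code.succ (Code.const n)).2

lemma encode_comp_mono (c : Code) {g₁ g₂ : Code}
    (h : Encodable.encode g₁ < Encodable.encode g₂) :
    Encodable.encode (c.comp g₁) < Encodable.encode (c.comp g₂) := by
  simp only [encodeCode_eq, encodeCode] at *
  have := Nat.pair_lt_pair_right c.encodeCode h
  omega

lemma encode_pair_mono_left {f₁ f₂ : Code} (g : Code)
    (h : Encodable.encode f₁ < Encodable.encode f₂) :
    Encodable.encode (f₁.pair g) < Encodable.encode (f₂.pair g) := by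
  simp only [encodeCode_eq, encodeCode] at *
  have := Nat.pair_lt_pair_left g.encodeCode h
  omega

lemma encode_curry_strictMono (c : Code) :
    StrictMono fun n => Encodable.encode (curry c n) := by
  have hconst : StrictMono fun n => Encodable.encode (Code.const n) :=
    strictMono_nat_of_lt_succ encode_const_lt
  intro m n hmn
  exact encode_comp_mono c (encode_pair_mono_left Code.id (hconst hmn))

theorem stmt_1 :
    ∃ e : ℕ → ℕ, StrictMono e ∧ ∀ n : ℕ, W (e n) = {e (n + 1)} := by
  -- the partial function F c ⟨n, x⟩ halting iff x = encode (curry c (n+1))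
  let g : Code × ℕ → Option ℕ := fun p =>
    if p.2.unpair.2 = Encodable.encode (curry p.1 (p.2.unpair.1 + 1)) then some 0
    else Option.none
  let F : Code → ℕ →. ℕ := fun c m => ((g (c, m) : Option ℕ) : Part ℕ)
  have hF : ∀ c m, F c m = ((g (c, m) : Option ℕ) : Part ℕ) := fun _ _ => rfl
  have hg : ∀ p : Code × ℕ,
      g p = if p.2.unpair.2 = Encodable.encode (curry p.1 (p.2.unpair.1 + 1)) then some 0
        else Option.none := fun _ => rfl
  have hgpr : Primrec g := by
    apply Primrec.ite
    · apply PrimrecRel.comp Primrec.eq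
      · exact Primrec.snd.comp (Primrec.unpair.comp Primrec.snd)
      · exact Primrec.encode.comp
          (primrec₂_curry.comp Primrec.fst
            (Primrec.succ.comp (Primrec.fst.comp (Primrec.unpair.comp Primrec.snd))))
    · exact Primrec.const _
    · exact Primrec.const _
  have hFpr : Partrec₂ F := hgpr.to_comp.ofOption
  obtain ⟨c, hc⟩ := fixed_point₂ hFpr
  refine ⟨fun n => Encodable.encode (curry c n), encode_curry_strictMono c, fun n => ?_⟩
  ext x
  have hphi : phi (Encodable.encode (curry c n)) = (curry c n).eval := by
    simp [phi, Denumerable.ofNat_encode]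
  simp only [W, hphi, PFun.mem_dom]
  constructor
  · rintro ⟨y, hy⟩
    rw [eval_curry, hc, hF, hg] at hy
    simp only [Nat.unpair_pair] at hy
    by_cases h : x = Encodable.encode (curry c (n + 1))
    · simpa using h
    · simp [h] at hy
  · intro hx
    simp only [Set.mem_singleton_iff] at hx
    refine ⟨0, ?_⟩
    rw [eval_curry, hc, hF, hg]
    simp [hx]
end

section
/- For every n > 0 there exists a finite sequence e_0 < e_1 < ⋯ < e_n of natural numbers such that W_{e_i} = {e_{i+1}} for all i < n and W_{e_n} = {e_0}. -/
open Nat.Partrec.Code in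
lemma const_strictMono : StrictMono fun n => encodeCode (Nat.Partrec.Code.const n) := by
  apply strictMono_nat_of_lt_succ
  intro k
  show encodeCode (Nat.Partrec.Code.const k) < encodeCode (Nat.Partrec.Code.const (k + 1))
  have h1 : encodeCode (Nat.Partrec.Code.const (k + 1)) =
      2 * (2 * Nat.pair 1 (encodeCode (Nat.Partrec.Code.const k)) + 1) + 4 := rfl
  have h2 := Nat.right_le_pair 1 (encodeCode (Nat.Partrec.Code.const k))
  omega

open Nat.Partrec.Code in
lemma curry_strictMono (c : Nat.Partrec.Code) :
    StrictMono fun n => encodeCode (curry c n) := by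
  intro i j hij
  show encodeCode (curry c i) < encodeCode (curry c j)
  have e1 : ∀ k, encodeCode (curry c k) =
      2 * (2 * Nat.pair (encodeCode c)
        (2 * (2 * Nat.pair (encodeCode (Nat.Partrec.Code.const k))
          (encodeCode Nat.Partrec.Code.id)) + 4) + 1) + 4 := fun k => rfl
  rw [e1 i, e1 j]
  have h1 : encodeCode (Nat.Partrec.Code.const i)
      < encodeCode (Nat.Partrec.Code.const j) := const_strictMono hij
  have h2 := Nat.pair_lt_pair_left (encodeCode Nat.Partrec.Code.id) h1
  have h3 := Nat.pair_lt_pair_right (encodeCode c)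
    (show 2 * (2 * Nat.pair (encodeCode (Nat.Partrec.Code.const i))
        (encodeCode Nat.Partrec.Code.id)) + 4
      < 2 * (2 * Nat.pair (encodeCode (Nat.Partrec.Code.const j))
        (encodeCode Nat.Partrec.Code.id)) + 4 by omega)
  omega

theorem stmt_3 (n : ℕ) (hn : 0 < n) :
    ∃ e : ℕ → ℕ, (∀ i < n, e i < e (i + 1)) ∧
      (∀ i < n, W (e i) = {e (i + 1)}) ∧ W (e n) = {e 0} := by
  classical
  set m := n + 1 with hm
  let g : Nat.Partrec.Code × ℕ → Option ℕ := fun p =>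
    if p.2.unpair.2 = Encodable.encode (Nat.Partrec.Code.curry p.1 ((p.2.unpair.1 + 1) % m))
      then some 0 else none
  have hg : Computable g := by
    have h1 : Primrec fun p : Nat.Partrec.Code × ℕ => p.2.unpair.2 :=
      (Primrec.snd.comp (Primrec.unpair.comp Primrec.snd))
    have h2 : Primrec fun p : Nat.Partrec.Code × ℕ =>
        Encodable.encode (Nat.Partrec.Code.curry p.1 ((p.2.unpair.1 + 1) % m)) :=
      Primrec.encode.comp (Nat.Partrec.Code.primrec₂_curry.comp Primrec.fst
        (Primrec.nat_mod.comp
          ((Primrec.succ).comp (Primrec.fst.comp (Primrec.unpair.comp Primrec.snd)))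
          (Primrec.const m)))
    exact ((Primrec.ite (Primrec.eq.comp h1 h2) (Primrec.const (some 0))
      (Primrec.const none))).to_comp
  have hf : Partrec₂ fun (c : Nat.Partrec.Code) (y : ℕ) => ((g (c, y) : Option ℕ) : Part ℕ) := by
    have := hg.ofOption
    exact this.comp Computable.id |>.of_eq (by intro p; rfl)
  obtain ⟨c, hc⟩ := Nat.Partrec.Code.fixed_point₂ hf
  set e : ℕ → ℕ := fun i => Encodable.encode (Nat.Partrec.Code.curry c (i % m)) with he
  have h1m : 1 % m = 1 := Nat.mod_eq_of_lt (by omega)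
  have hmod : ∀ i : ℕ, (i % m + 1) % m = (i + 1) % m := fun i => by
    rw [Nat.add_mod i 1 m, h1m]
  have hW : ∀ i, W (e i) =
      {Encodable.encode (Nat.Partrec.Code.curry c ((i + 1) % m))} := by
    intro i
    ext x
    have hphi : phi (e i) = Nat.Partrec.Code.eval (Nat.Partrec.Code.curry c (i % m)) := by
      simp [phi, he]
    have hmem : x ∈ W (e i) ↔ (phi (e i) x).Dom := Iff.rfl
    rw [Set.mem_singleton_iff, hmem, hphi, Nat.Partrec.Code.eval_curry, hc]
    simp only [g, Nat.unpair_pair, hmod i]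
    split_ifs with h
    · simp [h]
    · simp [h]
  refine ⟨e, ?_, ?_, ?_⟩
  · intro i hi
    have h1 : i % m = i := Nat.mod_eq_of_lt (by omega)
    have h2 : (i + 1) % m = i + 1 := Nat.mod_eq_of_lt (by omega)
    simp only [he, h1, h2]
    exact curry_strictMono c (Nat.lt_succ_self i)
  · intro i _
    rw [hW i]
  · rw [hW n, show (n + 1) % m = 0 by simp [hm]]
    simp [he]
end

section
/- There exists a computable strictly increasing sequence ⟨e_n : n ∈ ℕ⟩ such that for every n, W_{e_n} = {e_m : m > n}. -/
namespace Stmt4Aux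

open Nat.Partrec Nat.Partrec.Code

/-- A padding operation preserving `eval` but increasing the code. -/
def pad (c : Code) : Code := c.comp Code.id

theorem eval_pad (c : Code) (x : ℕ) : (pad c).eval x = c.eval x := by
  show Code.id.eval x >>= c.eval = c.eval x
  simp [eval_id]
  exact Part.bind_some x c.eval

theorem encode_lt_pad (c : Code) : Encodable.encode c < Encodable.encode (pad c) :=
  (encode_lt_comp c Code.id).1

/-- Iterated padding. -/
def padN (c : Code) : ℕ → Code
  | 0 => c
  | n + 1 => pad (padN c n)

theorem eval_padN (c : Code) (j x : ℕ) : (padN c j).eval x = c.eval x := by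
  induction j with
  | zero => rfl
  | succ n ih => rw [padN, eval_pad, ih]

theorem le_encode_padN (c : Code) (j : ℕ) :
    Encodable.encode c + j ≤ Encodable.encode (padN c j) := by
  induction j with
  | zero => simp [padN]
  | succ n ih =>
    have := encode_lt_pad (padN c n)
    rw [padN]
    omega

theorem padN_computable : Computable₂ padN := by
  have h := Computable.nat_rec (f := fun p : Code × ℕ => p.2) (g := fun p : Code × ℕ => p.1)
    (h := fun (_ : Code × ℕ) (q : ℕ × Code) => pad q.2)
    Computable.snd Computable.fst
    ((primrec₂_comp.comp (Primrec.snd.comp Primrec.snd) (Primrec.const Code.id)).to_comp.to₂)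
  refine h.of_eq fun p => ?_
  obtain ⟨a, b⟩ := p
  induction b with
  | zero => rfl
  | succ n ih => simpa [padN] using congrArg pad ih

/-- The sequence of indices built from code `c`, padded for strict monotonicity. -/
def eFun (c : Code) : ℕ → ℕ
  | 0 => Encodable.encode (curry c 0)
  | n + 1 => Encodable.encode (padN (curry c (n + 1)) (eFun c n + 1))

theorem eFun_computable : Computable₂ eFun := by
  have h := Computable.nat_rec (f := fun p : Code × ℕ => p.2)
    (g := fun p : Code × ℕ => Encodable.encode (curry p.1 0))
    (h := fun (p : Code × ℕ) (q : ℕ × ℕ) =>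
      Encodable.encode (padN (curry p.1 (q.1 + 1)) (q.2 + 1)))
    Computable.snd
    (Computable.encode.comp ((primrec₂_curry.comp Primrec.fst (Primrec.const 0)).to_comp))
    (Computable.encode.comp (padN_computable.comp
      ((primrec₂_curry.comp (Primrec.fst.comp Primrec.fst)
        (Primrec.succ.comp (Primrec.fst.comp Primrec.snd))).to_comp)
      (Computable.succ.comp (Computable.snd.comp Computable.snd)))).to₂
  refine h.of_eq fun p => ?_
  obtain ⟨a, b⟩ := p
  induction b with
  | zero => rfl
  | succ n ih => simpa [eFun] using congrArg (fun t => Encodable.encode (padN (a.curry (n+1)) (t+1))) ih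

theorem eFun_strictMono (c : Code) : StrictMono (eFun c) := by
  apply strictMono_nat_of_lt_succ
  intro n
  have := le_encode_padN (curry c (n + 1)) (eFun c n + 1)
  show eFun c n < Encodable.encode (padN (curry c (n + 1)) (eFun c n + 1))
  omega

theorem eval_eFun (c : Code) (n x : ℕ) :
    (Denumerable.ofNat Code (eFun c n)).eval x = c.eval (Nat.pair n x) := by
  cases n with
  | zero => rw [eFun, Denumerable.ofNat_encode, eval_curry]
  | succ n => rw [eFun, Denumerable.ofNat_encode, eval_padN, eval_curry]

/-- The functional whose fixed point we take. -/
def F (c : Code) (y : ℕ) : Part ℕ :=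
  Nat.rfind fun m => Part.some (decide (y.unpair.1 < m) && decide (y.unpair.2 = eFun c m))

theorem hb_computable : Computable₂ fun (p : Code × ℕ) (m : ℕ) =>
    (decide (p.2.unpair.1 < m) && decide (p.2.unpair.2 = eFun p.1 m)) := by
  have hlt : Computable fun q : (Code × ℕ) × ℕ => decide (q.1.2.unpair.1 < q.2) :=
    (Primrec.nat_lt.comp (Primrec.fst.comp (Primrec.unpair.comp
      (Primrec.snd.comp Primrec.fst))) Primrec.snd).decide.to_comp
  have heq : Computable fun q : (Code × ℕ) × ℕ => decide (q.1.2.unpair.2 = eFun q.1.1 q.2) :=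
    (Primrec.eq.decide.to_comp.comp
      (Computable.snd.comp (Computable.unpair.comp (Computable.snd.comp Computable.fst)))
      (eFun_computable.comp (Computable.fst.comp Computable.fst) Computable.snd))
  exact (Primrec.and.to_comp.comp hlt heq).to₂

theorem F_partrec : Partrec₂ F := by
  refine (Partrec.rfind hb_computable.partrec₂).of_eq fun p => ?_
  unfold F
  rfl

theorem F_dom (c : Code) (y : ℕ) :
    (F c y).Dom ↔ ∃ m, y.unpair.1 < m ∧ y.unpair.2 = eFun c m := by
  rw [F]
  refine Nat.rfind_dom.trans ?_
  constructor
  · rintro ⟨n, h, -⟩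
    refine ⟨n, ?_⟩
    simpa [Part.eq_some_iff.symm, Bool.and_eq_true, decide_eq_true_iff] using h
  · rintro ⟨n, h1, h2⟩
    exact ⟨n, by simp [h1, h2], fun _ => trivial⟩

end Stmt4Aux

open Stmt4Aux Nat.Partrec Nat.Partrec.Code in
theorem stmt_4 :
    ∃ e : ℕ → ℕ, Computable e ∧ StrictMono e ∧
      ∀ n : ℕ, W (e n) = {x | ∃ m, n < m ∧ x = e m} := by
  obtain ⟨c, hc⟩ := fixed_point₂ F_partrec
  refine ⟨eFun c, eFun_computable.comp (Computable.const c) Computable.id, eFun_strictMono c, ?_⟩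
  intro n
  ext x
  have hev : phi (eFun c n) x = F c (Nat.pair n x) := by
    rw [phi, eval_eFun, hc]
  simp only [W, Set.mem_setOf_eq, PFun.mem_dom]
  constructor
  · rintro ⟨y, hy⟩
    have : (F c (Nat.pair n x)).Dom := by
      rw [← hev]; exact Part.dom_iff_mem.2 ⟨y, hy⟩
    obtain ⟨m, h1, h2⟩ := (F_dom c (Nat.pair n x)).1 this
    simp only [Nat.unpair_pair] at h1 h2
    exact ⟨m, h1, h2⟩
  · rintro ⟨m, h1, h2⟩
    have : (F c (Nat.pair n x)).Dom :=
      (F_dom c (Nat.pair n x)).2 ⟨m, by simpa using h1, by simpa using h2⟩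
    rw [← hev] at this
    exact Part.dom_iff_mem.1 this
end

section
/- There exists a strictly increasing sequence ⟨e_n : n ∈ ℕ⟩ such that W_{e_n} = {e_m : m > n} for all n, and the sequence n ↦ e_n is not computable. -/
namespace Stmt5Aux

open Nat.Partrec Nat.Partrec.Code Encodable Denumerable

/-- The halting set: codes (as numbers) halting on input 0. -/
def S (k : ℕ) : Prop := (eval (ofNat Code k) 0).Dom

theorem S_infinite : (setOf S).Infinite :=
  Set.infinite_of_injective_forall_mem
    (f := fun j : ℕ => encode (Code.const j))
    (fun a b h => const_inj (encode_injective h))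
    (fun j => by
      show (eval (ofNat Code (encode (Code.const j))) 0).Dom
      rw [ofNat_encode, eval_const]; trivial)

/-- The search predicate. -/
def P : Code × ℕ → ℕ → Bool := fun a m =>
  decide (a.2.unpair.1 < m.unpair.1) &&
  decide (encode (curry a.1 m.unpair.1) = a.2.unpair.2) &&
  (evaln m.unpair.2 (ofNat Code m.unpair.1) 0).isSome

theorem P_primrec : Primrec₂ P := by
  have hk : Primrec fun p : (Code × ℕ) × ℕ => p.2.unpair.1 :=
    Primrec.fst.comp (Primrec.unpair.comp Primrec.snd)
  have ht : Primrec fun p : (Code × ℕ) × ℕ => p.2.unpair.2 :=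
    Primrec.snd.comp (Primrec.unpair.comp Primrec.snd)
  have hn : Primrec fun p : (Code × ℕ) × ℕ => p.1.2.unpair.1 :=
    Primrec.fst.comp (Primrec.unpair.comp (Primrec.snd.comp Primrec.fst))
  have hy : Primrec fun p : (Code × ℕ) × ℕ => p.1.2.unpair.2 :=
    Primrec.snd.comp (Primrec.unpair.comp (Primrec.snd.comp Primrec.fst))
  have b1 : Primrec fun p : (Code × ℕ) × ℕ => decide (p.1.2.unpair.1 < p.2.unpair.1) :=
    (Primrec.nat_lt.comp hn hk).decide
  have b2 : Primrec fun p : (Code × ℕ) × ℕ =>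
      decide (encode (curry p.1.1 p.2.unpair.1) = p.1.2.unpair.2) :=
    (Primrec.eq.comp (Primrec.encode.comp (primrec₂_curry.comp (Primrec.fst.comp Primrec.fst) hk)) hy).decide
  have b3 : Primrec fun p : (Code × ℕ) × ℕ =>
      (evaln p.2.unpair.2 (ofNat Code p.2.unpair.1) 0).isSome :=
    Primrec.option_isSome.comp
      (primrec_evaln.comp ((ht.pair ((Primrec.ofNat Code).comp hk)).pair (Primrec.const 0)))
  exact ((Primrec.dom_bool₂ (· && ·)).comp ((Primrec.dom_bool₂ (· && ·)).comp b1 b2) b3 :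
      Primrec fun p : (Code × ℕ) × ℕ => _)

/-- Target functional for the fixed point. -/
def fTarget : Code → ℕ →. ℕ := fun d x =>
  (Nat.rfind fun m => Part.some (P (d, x) m)).map fun _ => 0

theorem fTarget_partrec : Partrec₂ fTarget := by
  have hp : Partrec₂ fun (a : Code × ℕ) (m : ℕ) => (Part.some (P a m) : Part Bool) :=
    (P_primrec.to_comp : Computable₂ P)
  exact (Partrec.rfind hp).map (Computable.const 0).to₂

/-- The fixed-point code. -/
noncomputable def c : Code := (fixed_point₂ fTarget_partrec).choose

theorem hc : eval c = fTarget c := (fixed_point₂ fTarget_partrec).choose_spec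

/-- The index function. -/
noncomputable def g (k : ℕ) : ℕ := encode (curry c k)

theorem encode_const_strictMono : StrictMono fun n => encode (Code.const n) :=
  strictMono_nat_of_lt_succ fun n => (encode_lt_comp Code.succ (Code.const n)).2

theorem g_strictMono : StrictMono g := by
  intro k k' h
  have h1 : encodeCode (Code.const k) < encodeCode (Code.const k') := by
    have := encode_const_strictMono h
    simpa [encodeCode_eq] using this
  have h2 : encodeCode ((Code.const k).pair Code.id) < encodeCode ((Code.const k').pair Code.id) := by
    show 2 * (2 * Nat.pair (encodeCode (Code.const k)) (encodeCode Code.id)) + 4 <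
      2 * (2 * Nat.pair (encodeCode (Code.const k')) (encodeCode Code.id)) + 4
    have := Nat.pair_lt_pair_left (encodeCode Code.id) h1
    omega
  show encode (curry c k) < encode (curry c k')
  rw [encodeCode_eq]
  show 2 * (2 * Nat.pair (encodeCode c) (encodeCode ((Code.const k).pair Code.id)) + 1) + 4 <
    2 * (2 * Nat.pair (encodeCode c) (encodeCode ((Code.const k').pair Code.id)) + 1) + 4
  have := Nat.pair_lt_pair_right (encodeCode c) h2
  omega

theorem dom_iff (k x : ℕ) :
    (eval (curry c k) x).Dom ↔ ∃ k', k < k' ∧ S k' ∧ x = g k' := by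
  rw [eval_curry, hc]
  show (Nat.rfind fun m => Part.some (P (c, Nat.pair k x) m)).Dom ↔ _
  refine Nat.rfind_dom.trans ?_
  beta_reduce
  constructor
  · rintro ⟨m, hm, -⟩
    have hm' : P (c, Nat.pair k x) m = true := (Part.mem_some_iff.1 hm).symm
    simp only [P, Nat.unpair_pair, Bool.and_eq_true, decide_eq_true_eq] at hm'
    obtain ⟨⟨h1, h2⟩, h3⟩ := hm'
    obtain ⟨v, hv⟩ := Option.isSome_iff_exists.1 h3
    exact ⟨m.unpair.1, h1, Part.dom_iff_mem.2 ⟨v, evaln_sound (by simpa using hv)⟩, h2.symm⟩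
  · rintro ⟨k', hkk', hS, rfl⟩
    obtain ⟨v, hv⟩ := Part.dom_iff_mem.1 hS
    obtain ⟨t, hvt⟩ := evaln_complete.1 hv
    refine ⟨Nat.pair k' t, ?_, fun {_} _ => trivial⟩
    rw [Part.mem_some_iff]
    symm
    simp only [P, Nat.unpair_pair, Bool.and_eq_true, decide_eq_true_eq]
    exact ⟨⟨hkk', rfl⟩, Option.isSome_iff_exists.2 ⟨v, by simpa using hvt⟩⟩

theorem W_g (k : ℕ) : W (g k) = {x | (eval (curry c k) x).Dom} := by
  have : phi (g k) = eval (curry c k) := by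
    show eval (ofNat Code (encode (curry c k))) = _
    rw [ofNat_encode]
  rw [W, this]
  rfl

end Stmt5Aux

theorem stmt_5 :
    ∃ e : ℕ → ℕ, StrictMono e ∧
      (∀ n : ℕ, W (e n) = {x | ∃ m, n < m ∧ x = e m}) ∧
      ¬ Computable e := by
  classical
  open Stmt5Aux Nat.Partrec.Code Encodable Denumerable in
  refine ⟨fun n => g (Nat.nth S n), g_strictMono.comp (Nat.nth_strictMono S_infinite), ?_, ?_⟩
  · intro n
    ext x
    rw [W_g]
    simp only [Set.mem_setOf_eq, dom_iff]
    constructor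
    · rintro ⟨k', hlt, hS, rfl⟩
      refine ⟨Nat.count S k', ?_, ?_⟩
      · have h1 : Nat.nth S (Nat.count S k') = k' := Nat.nth_count hS
        exact (Nat.nth_lt_nth S_infinite).1 (by rw [h1]; exact hlt)
      · rw [Nat.nth_count hS]
    · rintro ⟨m, hm, rfl⟩
      exact ⟨Nat.nth S m, (Nat.nth_lt_nth S_infinite).2 hm,
        Nat.nth_mem_of_infinite S_infinite m, rfl⟩
  · intro he
    set eFun : ℕ → ℕ := fun n => g (Nat.nth S n) with heFun
    set F : ℕ → Bool := fun k =>
      Nat.rec false (fun j ih => ih || decide (eFun j = g k)) (k + 1) with hFdef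
    have hg_comp : Computable g :=
      (Primrec.encode.comp (primrec₂_curry.comp (Primrec.const c) Primrec.id)).to_comp
    have hh : Computable₂ fun (k : ℕ) (p : ℕ × Bool) => p.2 || decide (eFun p.1 = g k) :=
      ((Primrec.dom_bool₂ (· || ·)).to_comp).comp
        (Computable.snd.comp Computable.snd)
        (((Primrec.eq (α := ℕ)).decide.to_comp).comp (he.comp (Computable.fst.comp Computable.snd))
          (hg_comp.comp Computable.fst))
    have hFcomp : Computable F :=
      (Computable.nat_rec Computable.succ (Computable.const false) hh).of_eq fun k => rfl
    have Fspec : ∀ k, F k = true ↔ ∃ n ≤ k, eFun n = g k := by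
      intro k
      have key : ∀ j, (Nat.rec false (fun j ih => ih || decide (eFun j = g k)) j : Bool) = true
          ↔ ∃ n < j, eFun n = g k := by
        intro j
        induction j with
        | zero => simp
        | succ j ih =>
          show (_ || _) = true ↔ _
          rw [Bool.or_eq_true, ih, decide_eq_true_eq]
          constructor
          · rintro (⟨n, hn, h⟩ | h)
            · exact ⟨n, hn.trans (Nat.lt_succ_self j), h⟩
            · exact ⟨j, Nat.lt_succ_self j, h⟩
          · rintro ⟨n, hn, h⟩
            rcases Nat.lt_succ_iff_lt_or_eq.1 hn with h' | rfl
            · exact Or.inl ⟨n, h', h⟩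
            · exact Or.inr h
      have := key (k + 1)
      simp only [Nat.lt_succ_iff] at this
      exact this
    have hS_eq : S = fun k => (F k : Prop) := by
      funext k
      apply propext
      rw [show ((F k : Prop)) = (F k = true) from rfl, Fspec]
      constructor
      · intro hSk
        refine ⟨Nat.count S k, ?_, ?_⟩
        · have h2 : Nat.count S k ≤ Nat.nth S (Nat.count S k) :=
            (Nat.nth_strictMono S_infinite).le_apply
          rwa [Nat.nth_count hSk] at h2
        · show g (Nat.nth S (Nat.count S k)) = g k
          rw [Nat.nth_count hSk]
      · rintro ⟨n, -, h⟩
        have : Nat.nth S n = k := g_strictMono.injective h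
        rw [← this]
        exact Nat.nth_mem_of_infinite S_infinite n
    refine ComputablePred.halting_problem 0 ?_
    refine ComputablePred.computable_iff.2 ⟨fun cd => F (encode cd), hFcomp.comp Computable.encode, ?_⟩
    funext cd
    apply propext
    have h1 : S (encode cd) ↔ (eval cd 0).Dom := by rw [S, ofNat_encode]
    rw [← h1, hS_eq]
end

section
/- A nonempty computably enumerable set B is disjoint from an infinite computable set if and only if there is a computable permutation π of ℕ with π(A) = B for some self-constructing set A. -/
open Nat.Partrec (Code)
open Nat.Partrec.Code

namespace SCProof

theorem computable_nat_find {α} [Primcodable α] {p : α → ℕ → Bool}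
    (hp : Computable₂ p) (H : ∀ a, ∃ n, p a n = true) :
    Computable fun a => Nat.find (H a) := by
  have h1 : Partrec fun a => Nat.rfind (fun n => (Part.some (p a n) : Part Bool)) :=
    Partrec.rfind hp.partrec₂
  refine h1.of_eq fun a => ?_
  show _ = Part.some _
  rw [Part.eq_some_iff]
  refine Nat.mem_rfind.2 ⟨?_, fun {m} hm => ?_⟩
  · simpa using (Nat.find_spec (H a)).symm
  · simpa using (Bool.not_eq_true _) ▸ (Nat.find_min (H a) hm)

theorem exists_rank {g : ℕ → ℕ} (hg : Computable g) (hm : StrictMono g) :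
    ∃ r : ℕ → ℕ, Computable r ∧ ∀ k, r (g k) = k := by
  have H : ∀ x, ∃ k, decide (x ≤ g k) = true := fun x => ⟨x, by simp [hm.le_apply]⟩
  refine ⟨fun x => Nat.find (H x), computable_nat_find ?_ H, fun k => ?_⟩
  · exact ((Primrec.nat_le.decide.to_comp).comp Computable.fst (hg.comp Computable.snd)).to₂
  · rw [Nat.find_eq_iff]
    refine ⟨by simp, fun j hj => by simp [(hm hj).not_ge]⟩


structure EnumData (f : ℕ → Bool) where
  e : ℕ → ℕ
  comp : Computable e
  mono : StrictMono e
  mem : ∀ k, f (e k) = true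
  surj : ∀ n, f n = true → ∃ k, e k = n

theorem mkEnum {f : ℕ → Bool} (hf : Computable f)
    (H : ∀ x : ℕ, ∃ j : ℕ, f (x + j) = true) : Nonempty (EnumData f) := by
  classical
  -- F x = least element ≥ x of the set
  set F : ℕ → ℕ := fun x => x + Nat.find (H x) with hF
  have hFc : Computable F :=
    (Primrec.nat_add.to_comp).comp Computable.id
      (computable_nat_find
        ((hf.comp ((Primrec.nat_add.to_comp).comp Computable.fst Computable.snd)).to₂) H)
  have hFmem : ∀ x, f (F x) = true := fun x => Nat.find_spec (H x)
  have hFge : ∀ x, x ≤ F x := fun x => Nat.le_add_right _ _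
  have hFeq : ∀ x n, x ≤ n → f n = true → (∀ y, x ≤ y → y < n → f y ≠ true) → F x = n := by
    intro x n hxn hn hmin
    have h1 : F x ≤ n := by
      have := Nat.find_min' (H x) (m := n - x) (by simpa [Nat.add_sub_cancel' hxn] using hn)
      simp only [hF]; omega
    rcases lt_or_eq_of_le h1 with h | h
    · exact absurd (hFmem x) (hmin _ (hFge x) h)
    · exact h
  set e : ℕ → ℕ := fun k => Nat.rec (F 0) (fun _ IH => F (IH + 1)) k with he
  have hec : Computable e := by
    have := Computable.nat_rec Computable.id (Computable.const (F 0))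
      ((hFc.comp (Computable.succ.comp (Computable.snd.comp Computable.snd))).to₂)
    exact this.of_eq fun n => by simp [he]
  have hstep : ∀ k, e (k + 1) = F (e k + 1) := fun k => rfl
  have hmono : StrictMono e := strictMono_nat_of_lt_succ fun k => by
    have := hFge (e k + 1); rw [hstep]; omega
  have hmem : ∀ k, f (e k) = true := by
    intro k; cases k with
    | zero => exact hFmem 0
    | succ k => rw [hstep]; exact hFmem _
  have hsurj : ∀ n, f n = true → ∃ k, e k = n := by
    intro n
    induction n using Nat.strong_induction_on with
    | _ n IH =>
      intro hn
      by_cases h : ∃ m, m < n ∧ f m = true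
      · obtain ⟨m0, hm0, hm0f⟩ := h
        have hn0 : 0 < n := Nat.pos_of_ne_zero (by rintro rfl; omega)
        obtain ⟨m, hmf, hmle, hgreat⟩ :
            ∃ m, f m = true ∧ m ≤ n - 1 ∧ ∀ j, m < j → j ≤ n - 1 → ¬ f j = true :=
          ⟨Nat.findGreatest (fun m => f m = true) (n - 1),
            Nat.findGreatest_spec (P := fun m => f m = true) (show m0 ≤ n - 1 by omega) hm0f,
            Nat.findGreatest_le _,
            fun j h1 h2 => Nat.findGreatest_is_greatest (P := fun m => f m = true) h1 h2⟩
        have hmlt : m < n := by omega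
        obtain ⟨k, hk⟩ := IH m hmlt hmf
        refine ⟨k + 1, ?_⟩
        rw [hstep, hk]
        refine hFeq _ _ (by omega) hn ?_
        intro y hy1 hy2
        exact hgreat y (by omega) (by omega)
      · push_neg at h
        refine ⟨0, hFeq 0 n (Nat.zero_le _) hn ?_⟩
        intro y _ hy hyf
        exact h y hy hyf
  exact ⟨⟨e, hec, hmono, hmem, hsurj⟩⟩

theorem EnumData.e_rk {f : ℕ → Bool} (D : EnumData f) {r : ℕ → ℕ}
    (hr : ∀ k, r (D.e k) = k) {x : ℕ} (hx : f x = true) : D.e (r x) = x := by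
  obtain ⟨k, hk⟩ := D.surj x hx
  rw [← hk, hr]

theorem mkPerm {f g : ℕ → Bool} (hfc : Computable f) (hgc : Computable g) (Df : EnumData f) (Dnf : EnumData (fun x => !f x))
    (Dg : EnumData g) (Dng : EnumData (fun x => !g x)) :
    ∃ π : ℕ ≃ ℕ, Computable (π : ℕ → ℕ) ∧ Computable (π.symm : ℕ → ℕ) ∧
      ∀ k, π (Df.e k) = Dg.e k := by
  obtain ⟨rf, hrfc, hrf⟩ := exists_rank Df.comp Df.mono
  obtain ⟨rnf, hrnfc, hrnf⟩ := exists_rank Dnf.comp Dnf.mono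
  obtain ⟨rg, hrgc, hrg⟩ := exists_rank Dg.comp Dg.mono
  obtain ⟨rng, hrngc, hrng⟩ := exists_rank Dng.comp Dng.mono
  set σ : ℕ → ℕ := fun x => bif f x then Dg.e (rf x) else Dng.e (rnf x) with hσ
  set τ : ℕ → ℕ := fun y => bif g y then Df.e (rg y) else Dnf.e (rng y) with hτ
  have li : ∀ x, τ (σ x) = x := by
    intro x
    cases hx : f x
    · have hnx : (fun x => !f x) x = true := by simp [hx]
      have h1 : σ x = Dng.e (rnf x) := by simp [hσ, hx]
      have h2 : g (Dng.e (rnf x)) = false := by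
        have := Dng.mem (rnf x); simpa using this
      rw [h1, hτ]; simp only [h2, cond_false]
      rw [hrng]
      exact Dnf.e_rk hrnf hnx
    · have h1 : σ x = Dg.e (rf x) := by simp [hσ, hx]
      have h2 : g (Dg.e (rf x)) = true := Dg.mem _
      rw [h1, hτ]; simp only [h2, cond_true]
      rw [hrg]
      exact Df.e_rk hrf hx
  have ri : ∀ y, σ (τ y) = y := by
    intro y
    cases hy : g y
    · have hny : (fun x => !g x) y = true := by simp [hy]
      have h1 : τ y = Dnf.e (rng y) := by simp [hτ, hy]
      have h2 : f (Dnf.e (rng y)) = false := by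
        have := Dnf.mem (rng y); simpa using this
      rw [h1, hσ]; simp only [h2, cond_false]
      rw [hrnf]
      exact Dng.e_rk hrng hny
    · have h1 : τ y = Df.e (rg y) := by simp [hτ, hy]
      have h2 : f (Df.e (rg y)) = true := Df.mem _
      rw [h1, hσ]; simp only [h2, cond_true]
      rw [hrf]
      exact Dg.e_rk hrg hy
  refine ⟨⟨σ, τ, li, ri⟩, ?_, ?_, ?_⟩
  · exact Computable.cond hfc (Dg.comp.comp hrfc) (Dng.comp.comp hrnfc)
  · exact Computable.cond hgc (Df.comp.comp hrgc) (Dnf.comp.comp hrngc)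
  · intro k
    show σ (Df.e k) = Dg.e k
    simp [hσ, Df.mem k, hrf]

theorem const_encode_mono : StrictMono fun n => encodeCode (Code.const n) := by
  apply strictMono_nat_of_lt_succ
  intro n
  show encodeCode (Code.const n) < encodeCode (Code.comp Code.succ (Code.const n))
  have h := Nat.right_le_pair 1 (encodeCode (Code.const n))
  show encodeCode (Code.const n) <
    2 * (2 * Nat.pair (encodeCode Code.succ) (encodeCode (Code.const n)) + 1) + 4
  show encodeCode (Code.const n) <
    2 * (2 * Nat.pair 1 (encodeCode (Code.const n)) + 1) + 4
  omega

theorem curry_encode_eq (c : Code) (n : ℕ) : Encodable.encode (curry c n) =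
    2 * (2 * Nat.pair (encodeCode c)
      (2 * (2 * Nat.pair (encodeCode (Code.const n)) (encodeCode Code.id)) + 4) + 1) + 4 := by
  simp only [encodeCode_eq]; rfl

theorem curry_encode_mono (c : Code) : StrictMono fun n => Encodable.encode (curry c n) := by
  apply strictMono_nat_of_lt_succ
  intro n
  have h1 : encodeCode (Code.const n) < encodeCode (Code.const (n + 1)) :=
    const_encode_mono (Nat.lt_succ_self n)
  have h2 : Nat.pair (encodeCode (Code.const n)) (encodeCode Code.id)
      < Nat.pair (encodeCode (Code.const (n + 1))) (encodeCode Code.id) :=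
    Nat.pair_lt_pair_left _ h1
  have h4 : Nat.pair (encodeCode c)
        (2 * (2 * Nat.pair (encodeCode (Code.const n)) (encodeCode Code.id)) + 4)
      < Nat.pair (encodeCode c)
        (2 * (2 * Nat.pair (encodeCode (Code.const (n + 1))) (encodeCode Code.id)) + 4) :=
    Nat.pair_lt_pair_right _ (by omega)
  simp only [curry_encode_eq]
  omega

theorem curry_encode_mod4 (c : Code) (n : ℕ) : Encodable.encode (curry c n) % 4 = 2 := by
  rw [curry_encode_eq]
  omega

set_option maxHeartbeats 1000000 in
theorem key_fixed_point (u : ℕ → ℕ) (hu : Computable u) (c0 : Code) :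
    ∃ cs : Code, ∀ n x, (eval (curry cs n) x).Dom ↔
      ∃ k, Encodable.encode (curry cs k) = x ∧ (eval c0 (u k)).Dom := by
  set P : Code → ℕ → ℕ → Bool := fun c y m =>
    (decide (Encodable.encode (curry c m.unpair.1) = y.unpair.2)) &&
      (evaln m.unpair.2 c0 (u m.unpair.1)).isSome with hP
  have hPc : Computable₂ fun (p : Code × ℕ) (m : ℕ) => P p.1 p.2 m := by
    have h1 : Computable fun q : (Code × ℕ) × ℕ =>
        Encodable.encode (curry q.1.1 q.2.unpair.1) :=
      Computable.encode.comp (primrec₂_curry.to_comp.comp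
        (Computable.fst.comp Computable.fst)
        (Computable.fst.comp (Computable.unpair.comp Computable.snd)))
    have h2 : Computable fun q : (Code × ℕ) × ℕ => q.1.2.unpair.2 :=
      Computable.snd.comp (Computable.unpair.comp (Computable.snd.comp Computable.fst))
    have hdec : Computable fun q : (Code × ℕ) × ℕ =>
        decide (Encodable.encode (curry q.1.1 q.2.unpair.1) = q.1.2.unpair.2) :=
      (Primrec.eq.decide.to_comp).comp h1 h2
    have hev : Computable fun q : (Code × ℕ) × ℕ =>
        (evaln q.2.unpair.2 c0 (u q.2.unpair.1)).isSome := by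
      have : Computable fun q : (Code × ℕ) × ℕ =>
          evaln q.2.unpair.2 c0 (u q.2.unpair.1) := by
        have := primrec_evaln.to_comp (α := (ℕ × Code) × ℕ)
        exact this.comp ((((Computable.snd.comp (Computable.unpair.comp Computable.snd)).pair
          (Computable.const c0)).pair
          (hu.comp (Computable.fst.comp (Computable.unpair.comp Computable.snd)))))
      exact Primrec.option_isSome.to_comp.comp this
    exact (Computable.cond hdec hev (Computable.const false)).of_eq fun q => by
      rw [hP]
      cases hd : decide (Encodable.encode (curry q.1.1 q.2.unpair.1) = q.1.2.unpair.2) <;>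
        simp [hd]
  set f : Code → ℕ →. ℕ := fun c y => Nat.rfind fun m => Part.some (P c y m) with hf
  have hfp : Partrec₂ f := by
    apply Partrec.rfind
    exact (hPc).partrec₂
  obtain ⟨cs, hcs⟩ := fixed_point₂ hfp
  refine ⟨cs, fun n x => ?_⟩
  rw [eval_curry, hcs]
  have hdom : (f cs (Nat.pair n x)).Dom ↔ ∃ m, P cs (Nat.pair n x) m = true := by
    rw [hf]
    simp only [Nat.rfind_dom]
    constructor
    · rintro ⟨m, hm, _⟩; exact ⟨m, by simpa using hm⟩
    · rintro ⟨m, hm⟩; exact ⟨m, by simpa using hm, fun {_} _ => trivial⟩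
  rw [hdom]
  constructor
  · rintro ⟨m, hm⟩
    rw [hP] at hm
    simp only [Bool.and_eq_true, decide_eq_true_eq, Nat.unpair_pair] at hm
    obtain ⟨h1, h2⟩ := hm
    refine ⟨m.unpair.1, h1, ?_⟩
    rw [Part.dom_iff_mem]
    obtain ⟨y, hy⟩ := Option.isSome_iff_exists.1 h2
    exact ⟨y, evaln_sound (Option.mem_def.2 hy)⟩
  · rintro ⟨k, hk, hdom2⟩
    obtain ⟨y, hy⟩ := Part.dom_iff_mem.1 hdom2
    obtain ⟨s, hs⟩ := evaln_complete.1 hy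
    refine ⟨Nat.pair k s, ?_⟩
    rw [hP]
    simp only [Bool.and_eq_true, decide_eq_true_eq, Nat.unpair_pair]
    exact ⟨hk, by rw [Option.isSome_iff_exists]; exact ⟨y, hs⟩⟩

theorem exists_none_codes : ∃ p : ℕ → ℕ, Computable p ∧ StrictMono p ∧
    ∀ n x, ¬(eval (Denumerable.ofNat Code (p n)) x).Dom := by
  obtain ⟨c, hc⟩ := exists_code.1 Nat.Partrec.none
  set q : ℕ → Code := fun n => Nat.rec c (fun _ ih => ih.comp c) n with hq
  have hqc : Computable q := by
    have := Computable.nat_rec Computable.id (Computable.const c)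
      ((primrec₂_comp.to_comp.comp (Computable.snd.comp Computable.snd)
        (Computable.const c)).to₂)
    exact this.of_eq fun n => by simp [hq]
  have heval : ∀ n x, eval (q n) x = Part.none := by
    intro n
    induction n with
    | zero => intro x; exact congrFun hc x
    | succ n ih =>
      intro x
      show eval ((q n).comp c) x = Part.none
      simp [eval, hc, ih]
      exact Part.bind_none _
  refine ⟨fun n => Encodable.encode (q n), Computable.encode.comp hqc, ?_, ?_⟩
  · apply strictMono_nat_of_lt_succ
    intro n
    exact (encode_lt_comp (q n) c).1
  · intro n x
    rw [Denumerable.ofNat_encode, heval]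
    simp

end SCProof

/-- A set is computably enumerable iff it is W e for some e. -/
def CE (A : Set ℕ) : Prop := ∃ e, W e = A

/-- A nonempty c.e. set A is self-constructing if W e = A for every e ∈ A. -/
def SelfConstructing (A : Set ℕ) : Prop :=
  A.Nonempty ∧ CE A ∧ ∀ e ∈ A, W e = A

open SCProof in
set_option maxHeartbeats 1000000 in
theorem stmt_10 (B : Set ℕ) (hB : CE B) (hne : B.Nonempty) :
    (∃ E : Set ℕ, E.Infinite ∧ ComputablePred (· ∈ E) ∧ Disjoint B E) ↔
    (∃ π : ℕ ≃ ℕ, Computable (π : ℕ → ℕ) ∧ Computable (π.symm : ℕ → ℕ) ∧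
      ∃ A : Set ℕ, SelfConstructing A ∧ (π : ℕ → ℕ) '' A = B) := by
  have hnot : ∀ (h : ℕ → Bool), Computable h → Computable fun x => !h x := fun h hc =>
    (Computable.cond hc (Computable.const false) (Computable.const true)).of_eq
      (fun x => by cases h x <;> rfl)
  have hand : ∀ (h₁ h₂ : ℕ → Bool), Computable h₁ → Computable h₂ →
      Computable fun x => h₁ x && h₂ x := fun h₁ h₂ hc₁ hc₂ =>
    (Computable.cond hc₁ hc₂ (Computable.const false)).of_eq
      (fun x => by cases h₁ x <;> rfl)
  constructor
  · rintro ⟨E, hEinf, hEcomp, hdisj⟩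
    obtain ⟨χE, hχEc, hEeq⟩ := ComputablePred.computable_iff.1 hEcomp
    have hEmem : ∀ x, x ∈ E ↔ χE x = true := fun x => by
      conv_lhs => rw [show (x ∈ E) = ((· ∈ E) x) from rfl, hEeq]
    have HE : ∀ x : ℕ, ∃ j : ℕ, χE (x + j) = true := by
      intro x
      obtain ⟨b, hbE, hbx⟩ := hEinf.exists_gt x
      exact ⟨b - x, by rw [show x + (b - x) = b by omega]; exact (hEmem b).1 hbE⟩
    obtain ⟨DE⟩ := mkEnum hχEc HE
    obtain ⟨rE, hrEc, hrE⟩ := exists_rank DE.comp DE.mono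
    set χE' : ℕ → Bool := fun x => χE x && decide (rE x % 2 = 0) with hχE'
    have hχE'c : Computable χE' :=
      hand _ _ hχEc ((Primrec.eq.decide.to_comp).comp
        ((Primrec.nat_mod.to_comp).comp hrEc (Computable.const 2)) (Computable.const 0))
    set χC : ℕ → Bool := fun x => !(χE' x) with hχC
    have hχCc : Computable χC := hnot _ hχE'c
    have hE'even : ∀ k, χE' (DE.e (2 * k)) = true := fun k => by
      rw [hχE']; simp [DE.mem, hrE]
    have hE'odd : ∀ k, χE' (DE.e (2 * k + 1)) = false := fun k => by
      rw [hχE']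
      simp only [hrE]
      have h2 : (2 * k + 1) % 2 = 1 := by omega
      simp [h2]
    have hBC : ∀ b ∈ B, χC b = true := by
      intro b hb
      have hbE : b ∉ E := fun h => Set.disjoint_left.1 hdisj hb h
      have : χE b = false := by
        cases hv : χE b
        · rfl
        · exact absurd ((hEmem b).2 hv) hbE
      rw [hχC, hχE']; simp [this]
    have HC : ∀ x : ℕ, ∃ j : ℕ, χC (x + j) = true := by
      intro x
      have hx : x ≤ DE.e (2 * x + 1) := le_trans (by omega) (DE.mono.le_apply)
      refine ⟨DE.e (2 * x + 1) - x, ?_⟩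
      rw [show x + (DE.e (2 * x + 1) - x) = DE.e (2 * x + 1) by omega]
      show (!χE' (DE.e (2 * x + 1))) = true
      rw [hE'odd]; rfl
    obtain ⟨DC⟩ := mkEnum hχCc HC
    have HCc : ∀ x : ℕ, ∃ j : ℕ, (!χC (x + j)) = true := by
      intro x
      have hx : x ≤ DE.e (2 * x) := le_trans (by omega) (DE.mono.le_apply)
      refine ⟨DE.e (2 * x) - x, ?_⟩
      rw [show x + (DE.e (2 * x) - x) = DE.e (2 * x) by omega]
      show (!(!χE' (DE.e (2 * x)))) = true
      rw [hE'even]; rfl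
    obtain ⟨DCc⟩ := mkEnum (hnot _ hχCc) HCc
    -- the c.e. code for B
    obtain ⟨eB, heB⟩ := hB
    set c0 : Code := Denumerable.ofNat Code eB with hc0
    have hBdom : ∀ x, x ∈ B ↔ (eval c0 x).Dom := fun x => by
      rw [← heB]; exact Iff.rfl
    -- fixed point
    obtain ⟨cs, hcs⟩ := key_fixed_point DC.e DC.comp c0
    set g : ℕ → ℕ := fun n => Encodable.encode (curry cs n) with hgdef
    have hgc : Computable g :=
      Computable.encode.comp ((primrec₂_curry.to_comp).comp (Computable.const cs) Computable.id)
    have hgm : StrictMono g := curry_encode_mono cs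
    obtain ⟨rG, hrGc, hrG⟩ := exists_rank hgc hgm
    set χG : ℕ → Bool := fun x => decide (g (rG x) = x) with hχG
    have hχGc : Computable χG :=
      (Primrec.eq.decide.to_comp).comp (hgc.comp hrGc) Computable.id
    have hχG_iff : ∀ x, χG x = true ↔ ∃ k, g k = x := by
      intro x
      rw [hχG]
      simp only [decide_eq_true_eq]
      constructor
      · intro h; exact ⟨rG x, h⟩
      · rintro ⟨k, rfl⟩; rw [hrG]
    have hDGmem : ∀ k, χG (g k) = true := fun k => (hχG_iff _).2 ⟨k, rfl⟩
    have hDGsurj : ∀ n, χG n = true → ∃ k, g k = n := fun n hn => (hχG_iff n).1 hn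
    have HnG : ∀ x : ℕ, ∃ j : ℕ, (!χG (x + j)) = true := by
      intro x
      refine ⟨3 * x + 1, ?_⟩
      have h4 : χG (x + (3 * x + 1)) = false := by
        cases hv : χG (x + (3 * x + 1))
        · rfl
        · obtain ⟨k, hk⟩ := (hχG_iff _).1 hv
          have h1 := curry_encode_mod4 cs k
          have hk' : Encodable.encode (cs.curry k) = x + (3 * x + 1) := hk
          omega
      rw [h4]; rfl
    obtain ⟨DnG⟩ := mkEnum (hnot _ hχGc) HnG
    obtain ⟨π, hπ1, hπ2, hπspec⟩ := mkPerm hχGc hχCc ⟨g, hgc, hgm, hDGmem, hDGsurj⟩ DnG DC DCc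
    have hπg : ∀ k, π (g k) = DC.e k := hπspec
    -- the self-constructing set
    set A : Set ℕ := g '' (DC.e ⁻¹' B) with hA
    have hphig : ∀ n, phi (g n) = eval (curry cs n) := fun n => by
      show eval (Denumerable.ofNat Code (Encodable.encode (curry cs n))) = _
      rw [Denumerable.ofNat_encode]
    have WgA : ∀ n, W (g n) = A := by
      intro n
      ext x
      have h1 : x ∈ W (g n) ↔ (phi (g n) x).Dom := Iff.rfl
      rw [h1, hphig, hcs]
      constructor
      · rintro ⟨k, hk1, hk2⟩
        exact ⟨k, (hBdom _).2 hk2, hk1⟩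
      · rintro ⟨k, hk1, hk2⟩
        exact ⟨k, hk2, (hBdom _).1 hk1⟩
    refine ⟨π, hπ1, hπ2, A, ⟨?_, ⟨g 0, WgA 0⟩, ?_⟩, ?_⟩
    · obtain ⟨b, hb⟩ := hne
      obtain ⟨k, hk⟩ := DC.surj b (hBC b hb)
      exact ⟨g k, ⟨k, show DC.e k ∈ B from hk ▸ hb, rfl⟩⟩
    · rintro e ⟨k, _, rfl⟩
      exact WgA k
    · ext y
      constructor
      · rintro ⟨x, ⟨k, hkB, rfl⟩, rfl⟩
        rw [hπg k]
        exact hkB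
      · intro hy
        obtain ⟨k, hk⟩ := DC.surj y (hBC y hy)
        exact ⟨g k, ⟨k, show DC.e k ∈ B from hk ▸ hy, rfl⟩, by rw [hπg k, hk]⟩
  · rintro ⟨π, hπ1, hπ2, A, ⟨hAne, _, hAself⟩, himg⟩
    obtain ⟨p, hpc, hpm, hpnone⟩ := exists_none_codes
    obtain ⟨rP, hrPc, hrP⟩ := exists_rank hpc hpm
    have hpA : ∀ n, p n ∉ A := by
      intro n hn
      obtain ⟨a, ha⟩ := hAne
      rw [← hAself _ hn] at ha
      exact hpnone n a ha
    refine ⟨π '' Set.range p, ?_, ?_, ?_⟩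
    · rw [← Set.range_comp]
      exact Set.infinite_range_of_injective (π.injective.comp hpm.injective)
    · have hmem : ∀ x, x ∈ π '' Set.range p ↔ p (rP (π.symm x)) = π.symm x := by
        intro x
        constructor
        · rintro ⟨s, ⟨k, rfl⟩, rfl⟩
          simp [hrP]
        · intro h
          exact ⟨p (rP (π.symm x)), ⟨_, rfl⟩, by rw [h]; simp⟩
      refine ComputablePred.computable_iff.2
        ⟨fun x => decide (p (rP (π.symm x)) = π.symm x), ?_, ?_⟩
      · exact (Primrec.eq.decide.to_comp).comp (hpc.comp (hrPc.comp hπ2)) hπ2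
      · funext x
        simp only [decide_eq_true_eq]
        exact propext (hmem x)
    · rw [← himg]
      refine Set.disjoint_image_of_injective π.injective ?_
      refine Set.disjoint_left.2 fun a haA haS => ?_
      obtain ⟨n, rfl⟩ := haS
      exact hpA n haA
end

section
/- For every positive integer k there exists a self-constructing set of cardinality exactly k. -/
open Nat.Partrec Nat.Partrec.Code

/-- Padding: `pad i c` has the same semantics as `c` but strictly larger code for larger `i`. -/
def pad : ℕ → Code → Code
  | 0, c => c
  | i + 1, c => (pad i c).comp Code.id

lemma pad_eval (i : ℕ) (c : Code) : (pad i c).eval = c.eval := by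
  induction i with
  | zero => rfl
  | succ i ih =>
    funext n
    show (Code.id.eval n).bind (pad i c).eval = c.eval n
    rw [Code.eval_id]
    rw [ih]; exact Part.bind_some _ _

lemma pad_strictMono (c : Code) : StrictMono fun i => Encodable.encode (pad i c) :=
  strictMono_nat_of_lt_succ fun i => (Code.encode_lt_comp (pad i c) Code.id).1

lemma pad_primrec (i : ℕ) : Primrec (pad i) := by
  induction i with
  | zero => exact Primrec.id
  | succ i ih => exact (Code.primrec₂_comp.comp ih (Primrec.const Code.id)).of_eq fun c => rfl

/-- Boolean test: is `p.2` one of the codes `encode (pad j p.1)` for `j < i`? -/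
def inCodes : ℕ → Code × ℕ → Bool
  | 0, _ => false
  | i + 1, p => (p.2 == Encodable.encode (pad i p.1)) || inCodes i p

lemma inCodes_iff (i : ℕ) (p : Code × ℕ) :
    inCodes i p = true ↔ ∃ j < i, p.2 = Encodable.encode (pad j p.1) := by
  induction i with
  | zero => simp [inCodes]
  | succ i ih =>
    simp only [inCodes, Bool.or_eq_true, beq_iff_eq, ih]
    constructor
    · rintro (h | ⟨j, hj, h⟩)
      · exact ⟨i, Nat.lt_succ_self i, h⟩
      · exact ⟨j, hj.trans (Nat.lt_succ_self i), h⟩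
    · rintro ⟨j, hj, h⟩
      rcases Nat.lt_succ_iff_lt_or_eq.1 hj with hj | rfl
      · exact Or.inr ⟨j, hj, h⟩
      · exact Or.inl h

lemma inCodes_primrec (i : ℕ) : Primrec (inCodes i) := by
  induction i with
  | zero => exact Primrec.const false
  | succ i ih =>
    have h1 : Primrec fun p : Code × ℕ => (p.2 == Encodable.encode (pad i p.1)) :=
      Primrec.beq.comp Primrec.snd (Primrec.encode.comp ((pad_primrec i).comp Primrec.fst))
    exact (Primrec.or.comp h1 ih).of_eq fun p => rfl

theorem stmt_11 (k : ℕ) (hk : 0 < k) :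
    ∃ A : Set ℕ, SelfConstructing A ∧ A.ncard = k := by
  -- the partial function with domain the (future) set of codes
  set f : Code → ℕ →. ℕ :=
    fun c n => Part.ofOption (bif inCodes k (c, n) then some 0 else none) with hf
  have hfp : Partrec₂ f := by
    have hc : Computable fun p : Code × ℕ => (bif inCodes k p then (some 0 : Option ℕ) else none) :=
      Computable.cond (inCodes_primrec k).to_comp (Computable.const (some 0))
        (Computable.const none)
    exact (Computable.ofOption hc).of_eq fun p => by simp [hf]
  obtain ⟨c, hc⟩ := Code.fixed_point₂ hfp
  set g : ℕ → ℕ := fun j => Encodable.encode (pad j c) with hg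
  have hphi : ∀ j, phi (g j) = f c := by
    intro j
    have h1 : phi (g j) = (pad j c).eval := by
      simp [phi, hg, Denumerable.ofNat_encode]
    rw [h1, pad_eval, hc]
  have hdom : ∀ n, (f c n).Dom ↔ inCodes k (c, n) = true := by
    intro n
    cases h : inCodes k (c, n) <;> simp [hf, h]
  have key : ∀ j, W (g j) = ↑((Finset.range k).image g) := by
    intro j
    ext n
    simp only [W, PFun.Dom, Set.mem_setOf_eq, hphi j, hdom n, inCodes_iff,
      Finset.coe_image, Set.mem_image, Finset.mem_coe, Finset.mem_range]
    constructor
    · rintro ⟨j', hj', h⟩; exact ⟨j', hj', h.symm⟩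
    · rintro ⟨j', hj', h⟩; exact ⟨j', hj', h.symm⟩
  have hinj : Function.Injective g := (pad_strictMono c).injective
  refine ⟨↑((Finset.range k).image g), ⟨⟨g 0, ?_⟩, ⟨g 0, key 0⟩, ?_⟩, ?_⟩
  · simp only [Finset.coe_image, Set.mem_image, Finset.mem_coe, Finset.mem_range]
    exact ⟨0, hk, rfl⟩
  · intro e he
    simp only [Finset.coe_image, Set.mem_image, Finset.mem_coe, Finset.mem_range] at he
    obtain ⟨j, _, rfl⟩ := he
    exact key j
  · rw [Set.ncard_coe_finset, Finset.card_image_of_injective _ hinj, Finset.card_range]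
end

section
/- There exists an infinite self-constructing set. -/
open Nat.Partrec Nat.Partrec.Code in
theorem stmt_12 : ∃ A : Set ℕ, SelfConstructing A ∧ A.Infinite := by
  -- the function we take a fixed point of
  set f : Code → ℕ →. ℕ := fun c x =>
    Nat.rfind fun j => Part.some (decide (x.unpair.2 = Encodable.encode (curry c j))) with hf
  have hfp : Partrec₂ f := by
    apply Partrec.rfind
    apply Computable₂.partrec₂
    exact Primrec₂.to_comp <| PrimrecPred.decide <| Primrec.eq.comp
      (Primrec.snd.comp (Primrec.unpair.comp (Primrec.snd.comp Primrec.fst)))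
      (Primrec.encode.comp (primrec₂_curry.comp (Primrec.fst.comp Primrec.fst) Primrec.snd))
  obtain ⟨c, hc⟩ := fixed_point₂ hfp
  set A : Set ℕ := Set.range fun k => Encodable.encode (curry c k) with hA
  have key : ∀ k, W (Encodable.encode (curry c k)) = A := by
    intro k
    ext x
    have : phi (Encodable.encode (curry c k)) = (curry c k).eval := by
      simp [phi, Denumerable.ofNat_encode]
    simp only [W, this]
    change ((curry c k).eval x).Dom ↔ _
    rw [eval_curry, hc]
    simp only [hf]
    erw [Nat.rfind_dom]
    constructor
    · rintro ⟨j, hj, -⟩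
      simp only [Part.mem_some_iff] at hj
      have := of_decide_eq_true hj.symm
      simp only [Nat.unpair_pair] at this
      exact ⟨j, this.symm⟩
    · rintro ⟨j, rfl⟩
      refine ⟨j, ?_, fun _ => trivial⟩
      simp
  have hmem : ∀ k, Encodable.encode (curry c k) ∈ A := fun k => ⟨k, rfl⟩
  refine ⟨A, ⟨⟨_, hmem 0⟩, ⟨_, key 0⟩, ?_⟩, ?_⟩
  · rintro e ⟨k, rfl⟩; exact key k
  · apply Set.infinite_range_of_injective
    intro a b h
    exact (curry_inj (Encodable.encode_injective h)).2
end

section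
/- There exists a self-constructing set that is not computable. -/
set_option maxHeartbeats 1000000

open Nat.Partrec Nat.Partrec.Code

namespace SelfConstructAux

/-- Our own injective s-m-n style currying. -/
def fc (c : Nat.Partrec.Code) (m : ℕ) : Nat.Partrec.Code :=
  c.comp ((Nat.Partrec.Code.const m).pair Nat.Partrec.Code.id)

theorem fc_inj (c : Nat.Partrec.Code) : Function.Injective (fc c) := by
  intro a b h
  simp only [fc, Nat.Partrec.Code.comp.injEq, Nat.Partrec.Code.pair.injEq] at h
  exact Nat.Partrec.Code.const_inj h.2.1

theorem eval_fc (c : Nat.Partrec.Code) (m x : ℕ) :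
    eval (fc c m) x = eval c (Nat.pair m x) := by
  simp [fc, eval, eval_const, eval_id, Seq.seq]
  exact Part.bind_some (Nat.pair m x) (eval c)

/-- The halting set (on input 0). -/
def K : Set ℕ := fun m => (eval (Denumerable.ofNat Nat.Partrec.Code m) 0).Dom

/-- Decidable test used in the dovetailing search. -/
def g (c : Nat.Partrec.Code) (x p : ℕ) : Bool :=
  decide (x.unpair.2 = Encodable.encode (fc c p.unpair.1)) &&
    (evaln p.unpair.2 (Denumerable.ofNat Nat.Partrec.Code p.unpair.1) 0).isSome

def F (c : Nat.Partrec.Code) (x : ℕ) : Part ℕ :=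
  Nat.rfind fun p => Part.some (g c x p)

theorem g_comp : Computable fun q : (Nat.Partrec.Code × ℕ) × ℕ => g q.1.1 q.1.2 q.2 := by
  have hfc : Computable₂ fc := by
    have : Primrec₂ fc :=
      Nat.Partrec.Code.primrec₂_comp.comp Primrec.fst
        (Nat.Partrec.Code.primrec₂_pair.comp (Nat.Partrec.Code.primrec_const.comp Primrec.snd)
          (Primrec.const Nat.Partrec.Code.id))
    exact this.to_comp
  have h1 : Computable fun q : (Nat.Partrec.Code × ℕ) × ℕ =>
      decide (q.1.2.unpair.2 = Encodable.encode (fc q.1.1 q.2.unpair.1)) := by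
    have ha : Computable fun q : (Nat.Partrec.Code × ℕ) × ℕ => q.1.2.unpair.2 :=
      (Computable.snd.comp (Primrec.unpair.to_comp.comp (Computable.snd.comp Computable.fst)))
    have hb : Computable fun q : (Nat.Partrec.Code × ℕ) × ℕ =>
        Encodable.encode (fc q.1.1 q.2.unpair.1) :=
      Computable.encode.comp
        (hfc.comp (Computable.fst.comp Computable.fst)
          (Computable.fst.comp (Primrec.unpair.to_comp.comp Computable.snd)))
    exact Primrec.eq.decide.to_comp.comp ha hb
  have h2 : Computable fun q : (Nat.Partrec.Code × ℕ) × ℕ =>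
      (evaln q.2.unpair.2 (Denumerable.ofNat Nat.Partrec.Code q.2.unpair.1) 0).isSome := by
    have he : Computable fun q : (Nat.Partrec.Code × ℕ) × ℕ =>
        evaln q.2.unpair.2 (Denumerable.ofNat Nat.Partrec.Code q.2.unpair.1) 0 := by
      have := Nat.Partrec.Code.primrec_evaln.to_comp
      exact this.comp
        (((Computable.snd.comp (Primrec.unpair.to_comp.comp Computable.snd)).pair
          (Computable.ofNat _ |>.comp
            (Computable.fst.comp (Primrec.unpair.to_comp.comp Computable.snd)))).pair
          (Computable.const 0))
    exact (Primrec.option_isSome.to_comp).comp he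
  have : Computable fun q : (Nat.Partrec.Code × ℕ) × ℕ =>
      (decide (q.1.2.unpair.2 = Encodable.encode (fc q.1.1 q.2.unpair.1)) &&
        (evaln q.2.unpair.2 (Denumerable.ofNat Nat.Partrec.Code q.2.unpair.1) 0).isSome) :=
    (Primrec.and.to_comp).comp h1 h2
  exact this.of_eq fun q => rfl

theorem F_partrec : Partrec₂ F := by
  have h2 : Computable₂ fun (a : Nat.Partrec.Code × ℕ) (p : ℕ) => g a.1 a.2 p := g_comp
  have : Partrec fun a : Nat.Partrec.Code × ℕ => Nat.rfind fun p => Part.some (g a.1 a.2 p) :=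
    Partrec.rfind (h2.partrec₂.of_eq (fun a => rfl))
  exact this

theorem F_dom {c : Nat.Partrec.Code} {x : ℕ} :
    (F c x).Dom ↔ ∃ p, g c x p = true := by
  constructor
  · rintro h
    rw [F] at h
    obtain ⟨n, hn, -⟩ := Nat.rfind_dom.1 h
    exact ⟨n, by simpa using hn⟩
  · rintro ⟨p, hp⟩
    rw [F]
    refine Nat.rfind_dom.2 ⟨p, by simp [hp], fun _ => trivial⟩

theorem g_iff (c : Nat.Partrec.Code) (x : ℕ) :
    (∃ p, g c x p = true) ↔ ∃ m ∈ K, x.unpair.2 = Encodable.encode (fc c m) := by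
  constructor
  · rintro ⟨p, hp⟩
    simp only [g, Bool.and_eq_true, decide_eq_true_eq] at hp
    refine ⟨p.unpair.1, ?_, hp.1⟩
    obtain ⟨v, hv⟩ := Option.isSome_iff_exists.1 hp.2
    exact Part.dom_iff_mem.2 ⟨v, evaln_complete.2 ⟨p.unpair.2, by simpa using hv⟩⟩
  · rintro ⟨m, hm, hx⟩
    obtain ⟨v, hv⟩ := Part.dom_iff_mem.1 hm
    obtain ⟨k, hk⟩ := evaln_complete.1 hv
    refine ⟨Nat.pair m k, ?_⟩
    simp only [g, Bool.and_eq_true, decide_eq_true_eq, Nat.unpair_pair]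
    exact ⟨hx, Option.isSome_iff_exists.2 ⟨_, hk⟩⟩

end SelfConstructAux

open SelfConstructAux

theorem stmt_13 :
    ∃ A : Set ℕ, SelfConstructing A ∧ ¬ ComputablePred (· ∈ A) := by
  obtain ⟨c, hc⟩ := Nat.Partrec.Code.fixed_point₂ F_partrec
  set f0 : ℕ → ℕ := fun m => Encodable.encode (fc c m) with hf0
  set A : Set ℕ := fun x => ∃ m ∈ K, x = f0 m with hA
  have hWdom : ∀ m x, x ∈ W (f0 m) ↔ x ∈ A := by
    intro m x
    have : phi (f0 m) = eval (fc c m) := by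
      simp [phi, hf0, Denumerable.ofNat_encode]
    show (phi (f0 m) x).Dom ↔ _
    rw [this, eval_fc, hc, F_dom, g_iff]
    simp only [Nat.unpair_pair]
    exact Iff.rfl
  have hW : ∀ m, W (f0 m) = A := fun m => Set.ext fun x => hWdom m x
  have hinj : Function.Injective f0 := fun a b h =>
    fc_inj c (Encodable.encode_injective h)
  have hm0 : (Encodable.encode Nat.Partrec.Code.id : ℕ) ∈ K := by
    show (eval (Denumerable.ofNat Nat.Partrec.Code
      (Encodable.encode Nat.Partrec.Code.id)) 0).Dom
    rw [Denumerable.ofNat_encode, eval_id]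
    trivial
  refine ⟨A, ⟨⟨f0 (Encodable.encode Nat.Partrec.Code.id), ⟨_, hm0, rfl⟩⟩,
    ⟨f0 0, hW 0⟩, ?_⟩, ?_⟩
  · rintro e ⟨m, _, rfl⟩
    exact hW m
  · intro hcomp
    have hK : ComputablePred fun m => m ∈ K := by
      have hf0c : Computable f0 := by
        have : Primrec (fc c) :=
          Nat.Partrec.Code.primrec₂_comp.comp (Primrec.const c)
            (Nat.Partrec.Code.primrec₂_pair.comp Nat.Partrec.Code.primrec_const
              (Primrec.const Nat.Partrec.Code.id))
        exact (Primrec.encode.comp this).to_comp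
      obtain ⟨b, hb, hbeq⟩ := ComputablePred.computable_iff.1 hcomp
      have : ComputablePred fun m => f0 m ∈ A := by
        refine ComputablePred.computable_iff.2 ⟨fun m => b (f0 m), hb.comp hf0c, ?_⟩
        funext m
        exact congrFun hbeq (f0 m)
      refine this.of_eq fun m => ?_
      constructor
      · rintro ⟨m', hm', he⟩
        rwa [hinj he.symm] at hm'
      · intro hm
        exact ⟨m, hm, rfl⟩
    have : ComputablePred fun c : Nat.Partrec.Code => (eval c 0).Dom := by
      obtain ⟨b, hb, hbeq⟩ := ComputablePred.computable_iff.1 hK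
      refine ComputablePred.computable_iff.2
        ⟨fun d => b (Encodable.encode d), hb.comp Computable.encode, ?_⟩
      funext d
      have := congrFun hbeq (Encodable.encode d)
      rw [← this]
      show (eval d 0).Dom = (eval (Denumerable.ofNat Nat.Partrec.Code (Encodable.encode d)) 0).Dom
      rw [Denumerable.ofNat_encode]
    exact ComputablePred.halting_problem 0 this
end

section
/- If A is an infinite self-constructing set with one-to-one computable enumeration A = {a_n : n ∈ ℕ}, then there is a computable function f such that W_{f(e)} = {a_n : n ∈ W_e} for every e, and consequently φ_e is total if and only if W_{f(e)} is self-constructing. -/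
theorem stmt_19 (A : Set ℕ) (a : ℕ → ℕ)
    (hA : SelfConstructing A) (hinf : A.Infinite)
    (hinj : Function.Injective a) (hcomp : Computable a)
    (hrange : Set.range a = A) :
    ∃ f : ℕ → ℕ, Computable f ∧
      (∀ e : ℕ, W (f e) = a '' (W e)) ∧
      ∀ e : ℕ, (∀ n : ℕ, (phi e n).Dom) ↔ SelfConstructing (W (f e)) := by
  set F : ℕ →. ℕ := fun m =>
    (Nat.rfind fun n => Part.some (decide (a n = m.unpair.2))) >>=
      fun n => phi m.unpair.1 n with hF
  have hp : Computable fun p : ℕ × ℕ => (decide (a p.2 = p.1.unpair.2)) :=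
    Primrec.eq.decide.to_comp.comp (hcomp.comp Computable.snd)
      (Computable.snd.comp (Computable.unpair.comp Computable.fst))
  have hFpr : Partrec F := by
    apply Partrec.bind
    · exact Partrec.rfind hp
    · exact Nat.Partrec.Code.eval_part.comp
        ((Computable.ofNat _).comp (Computable.fst.comp
          (Computable.unpair.comp Computable.fst))) Computable.snd |>.to₂
  obtain ⟨c, hc⟩ := Nat.Partrec.Code.exists_code.1 (Partrec.nat_iff.1 hFpr)
  obtain ⟨s, hs, hsmn⟩ := Nat.Partrec.Code.smn
  have key : ∀ e x, phi (Encodable.encode (s c e)) x = F (Nat.pair e x) := by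
    intro e x
    simp [phi, Denumerable.ofNat_encode, hsmn, hc]
  have keyW : ∀ e : ℕ, W (Encodable.encode (s c e)) = a '' (W e) := by
    intro e
    ext x
    constructor
    · intro hx
      have hx' : (F (Nat.pair e x)).Dom := by
        rw [← key]; exact hx
      rw [hF] at hx'
      simp only [Part.bind_eq_bind, Nat.unpair_pair] at hx'
      obtain ⟨y, hy⟩ := Part.dom_iff_mem.1 hx'
      obtain ⟨n, hn1, hn2⟩ := Part.mem_bind_iff.1 hy
      have han : a n = x := by simpa using Nat.rfind_spec hn1
      exact ⟨n, Part.dom_iff_mem.2 ⟨y, hn2⟩, han⟩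
    · rintro ⟨n, hn, rfl⟩
      have hdom : (Nat.rfind fun k => Part.some (decide (a k = a n))).Dom :=
        Nat.rfind_dom.2 ⟨n, by simp, fun _ => trivial⟩
      obtain ⟨m, hm⟩ := Part.dom_iff_mem.1 hdom
      have hmn : m = n := hinj (by simpa using Nat.rfind_spec hm)
      subst hmn
      obtain ⟨y, hy⟩ := Part.dom_iff_mem.1 hn
      show (phi (Encodable.encode (s c e)) (a m)).Dom
      rw [key, hF]
      simp only [Part.bind_eq_bind, Nat.unpair_pair]
      exact Part.dom_iff_mem.2 ⟨y, Part.mem_bind_iff.2 ⟨m, hm, hy⟩⟩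
  refine ⟨fun e => Encodable.encode (s c e), Computable.encode.comp
    (hs.comp (Computable.const c) Computable.id), keyW, ?_⟩
  intro e
  constructor
  · intro htot
    have hWe : W e = Set.univ := Set.eq_univ_of_forall fun n => htot n
    rw [keyW, hWe, Set.image_univ, hrange]
    exact hA
  · intro hsc
    rw [keyW] at hsc
    obtain ⟨⟨x, hx⟩, _, hself⟩ := hsc
    have hxA : x ∈ A := by
      rw [← hrange]
      obtain ⟨n, _, rfl⟩ := hx
      exact ⟨n, rfl⟩
    have h1 : W x = A := hA.2.2 x hxA
    have h2 : W x = a '' (W e) := hself x hx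
    have hAeq : a '' (W e) = A := h2 ▸ h1
    intro n
    have : a n ∈ a '' (W e) := by
      rw [hAeq, ← hrange]; exact ⟨n, rfl⟩
    obtain ⟨m, hm, hmn⟩ := this
    have := hinj hmn
    subst this
    exact hm
end
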